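/- The generating function of b₁ is (1+2t)/((1+t)(1−2t)); equivalently, in the ring of formal power series over ℤ, (1+t)·(1−2t)·Σ_{k≥0} b₁(k)·t^k = 1 + 2t. -/

import Mathlib

open Polynomial

/-- `a₁ n` : number of nonzero coefficients of `(1+x+x²)ⁿ` over `𝔽₂`. -/
noncomputable def a1 (n : ℕ) : ℕ :=
  (((1 + X + X ^ 2 : (ZMod 2)[X]) ^ n).support).card

/-- `a₂ n` : number of nonzero coefficients of `(1+x)(1+x+x²)ⁿ` over `𝔽₂`. -/
noncomputable def a2 (n : ℕ) : ℕ :=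
  (((1 + X) * (1 + X + X ^ 2 : (ZMod 2)[X]) ^ n).support).card

lemma sq_eq_expand (q : (ZMod 2)[X]) : q ^ 2 = expand (ZMod 2) 2 q := by
  have h := map_frobenius_expand 2 q
  rw [ZMod.frobenius_zmod, Polynomial.map_id] at h
  exact h.symm

lemma coeff_comb_even (f g : (ZMod 2)[X]) (m : ℕ) :
    (expand (ZMod 2) 2 f + X * expand (ZMod 2) 2 g).coeff (2 * m) = f.coeff m := by
  rw [coeff_add, coeff_expand_mul' (by norm_num)]
  rcases m with _ | j
  · simp
  · have h2 : 2 * (j + 1) = (2 * j + 1) + 1 := by ring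
    rw [h2, coeff_X_mul, coeff_expand (by norm_num)]
    have : ¬ (2 ∣ 2 * j + 1) := by omega
    simp [this]

lemma coeff_comb_odd (f g : (ZMod 2)[X]) (m : ℕ) :
    (expand (ZMod 2) 2 f + X * expand (ZMod 2) 2 g).coeff (2 * m + 1) = g.coeff m := by
  rw [coeff_add, coeff_X_mul, coeff_expand_mul' (by norm_num), coeff_expand (by norm_num)]
  have : ¬ (2 ∣ 2 * m + 1) := by omega
  simp [this]

lemma card_comb (f g : (ZMod 2)[X]) :
    (expand (ZMod 2) 2 f + X * expand (ZMod 2) 2 g).support.card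
      = f.support.card + g.support.card := by
  have hsupp : (expand (ZMod 2) 2 f + X * expand (ZMod 2) 2 g).support
      = f.support.image (fun m => 2 * m) ∪ g.support.image (fun m => 2 * m + 1) := by
    ext n
    simp only [Finset.mem_union, Finset.mem_image, mem_support_iff]
    constructor
    · intro hn
      rcases Nat.even_or_odd n with ⟨m, hm⟩ | ⟨m, hm⟩
      · have : n = 2 * m := by omega
        subst this
        rw [coeff_comb_even] at hn
        exact Or.inl ⟨m, hn, rfl⟩
      · have : n = 2 * m + 1 := by omega
        subst this
        rw [coeff_comb_odd] at hn
        exact Or.inr ⟨m, hn, rfl⟩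
    · rintro (⟨m, hm, rfl⟩ | ⟨m, hm, rfl⟩)
      · rwa [coeff_comb_even]
      · rwa [coeff_comb_odd]
  rw [hsupp, Finset.card_union_of_disjoint, Finset.card_image_of_injective _ (fun a b h => by omega),
    Finset.card_image_of_injective _ (fun a b h => by omega)]
  simp only [Finset.disjoint_left, Finset.mem_image]
  rintro n ⟨m, _, rfl⟩ ⟨m', _, h⟩
  omega

lemma card_X_mul (q : (ZMod 2)[X]) : (X * q).support.card = q.support.card := by
  have hsupp : (X * q).support = q.support.image (· + 1) := by
    ext n
    simp only [Finset.mem_image, mem_support_iff]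
    constructor
    · intro hn
      rcases n with _ | m
      · simp at hn
      · rw [coeff_X_mul] at hn
        exact ⟨m, hn, rfl⟩
    · rintro ⟨m, hm, rfl⟩
      rwa [coeff_X_mul]
  rw [hsupp, Finset.card_image_of_injective _ (fun a b h => by omega)]

lemma pow_step (k : ℕ) :
    (1 + X + X ^ 2 : (ZMod 2)[X]) ^ (2 ^ (k + 1) - 1)
      = expand (ZMod 2) 2 ((1 + X + X ^ 2) ^ (2 ^ k - 1)) * (1 + X + X ^ 2) := by
  have h1 : 2 ^ (k + 1) - 1 = 2 * (2 ^ k - 1) + 1 := by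
    have : 1 ≤ 2 ^ k := Nat.one_le_two_pow
    omega
  rw [h1, ← sq_eq_expand, pow_succ, ← pow_mul, mul_comm (2 ^ k - 1) 2, pow_mul]

lemma recA (k : ℕ) :
    a1 (2 ^ (k + 1) - 1) = a2 (2 ^ k - 1) + a1 (2 ^ k - 1) := by
  set Q : (ZMod 2)[X] := (1 + X + X ^ 2) ^ (2 ^ k - 1) with hQ
  have key : (1 + X + X ^ 2 : (ZMod 2)[X]) ^ (2 ^ (k + 1) - 1)
      = expand (ZMod 2) 2 ((1 + X) * Q) + X * expand (ZMod 2) 2 Q := by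
    rw [pow_step, map_mul, map_add, map_one, expand_X]
    ring
  rw [a1, key, card_comb, a2, a1]

lemma recB (k : ℕ) :
    a2 (2 ^ (k + 1) - 1) = 2 * a1 (2 ^ k - 1) := by
  set Q : (ZMod 2)[X] := (1 + X + X ^ 2) ^ (2 ^ k - 1) with hQ
  have h2 : (2 : (ZMod 2)[X]) = 0 := by
    have h0 : (2 : ZMod 2) = 0 := by decide
    rw [← map_ofNat (C : ZMod 2 →+* (ZMod 2)[X]) 2, h0, C_0]
  have key : (1 + X) * (1 + X + X ^ 2 : (ZMod 2)[X]) ^ (2 ^ (k + 1) - 1)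
      = expand (ZMod 2) 2 Q + X * expand (ZMod 2) 2 (X * Q) := by
    rw [pow_step, map_mul, expand_X]
    linear_combination (X + X ^ 2) * expand (ZMod 2) 2 Q * h2
  rw [a2, key, card_comb, a1, card_X_mul, two_mul]

lemma a1_zero : a1 0 = 1 := by
  rw [a1, pow_zero, ← C_1, support_C (one_ne_zero), Finset.card_singleton]

lemma a1_one : a1 1 = 3 := by
  have h : (1 + X + X ^ 2 : (ZMod 2)[X]) ^ 1
      = C 1 * X ^ 0 + C 1 * X ^ 1 + C 1 * X ^ 2 := by
    simp
  rw [a1, h, card_support_trinomial (by norm_num) (by norm_num) one_ne_zero one_ne_zero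
    one_ne_zero]

lemma b_rec (k : ℕ) :
    a1 (2 ^ (k + 2) - 1) = a1 (2 ^ (k + 1) - 1) + 2 * a1 (2 ^ k - 1) := by
  rw [recA (k + 1), recB k, Nat.add_comm]

theorem b1_genfun :
    ((1 + PowerSeries.X) * (1 - 2 * PowerSeries.X)) *
        PowerSeries.mk (fun k => (a1 (2 ^ k - 1) : ℤ)) =
      1 + 2 * (PowerSeries.X : PowerSeries ℤ) := by
  set f : PowerSeries ℤ := PowerSeries.mk (fun k => (a1 (2 ^ k - 1) : ℤ)) with hf
  have key : ((1 + PowerSeries.X) * (1 - 2 * PowerSeries.X)) * f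
      = f - PowerSeries.X * f - PowerSeries.C 2 * (PowerSeries.X ^ 2 * f) := by
    have : (PowerSeries.C 2) = (2 : PowerSeries ℤ) := by
      rw [map_ofNat]
    rw [this]; ring
  rw [key]
  ext n
  rw [map_sub, map_sub, PowerSeries.coeff_C_mul]
  rcases n with _ | n
  · simp [hf, a1_zero]
  · rcases n with _ | m
    · have h0 : (2 : ℕ) ^ 0 - 1 = 0 := by norm_num
      have h1 : (2 : ℕ) ^ 1 - 1 = 1 := by norm_num
      rw [PowerSeries.coeff_succ_X_mul]
      simp [hf, PowerSeries.coeff_X_pow_mul', h0, h1, a1_zero, a1_one, map_ofNat]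
    · have hrec := b_rec m
      rw [PowerSeries.coeff_succ_X_mul,
        show (PowerSeries.coeff (m + 1 + 1)) (PowerSeries.X ^ 2 * f)
            = PowerSeries.coeff m f from PowerSeries.coeff_X_pow_mul f 2 m]
      simp only [hf, PowerSeries.coeff_mk, map_add, PowerSeries.coeff_one,
        PowerSeries.coeff_X]
      have hcast : (a1 (2 ^ (m + 2) - 1) : ℤ)
          = (a1 (2 ^ (m + 1) - 1) : ℤ) + 2 * (a1 (2 ^ m - 1) : ℤ) := by
        exact_mod_cast congrArg (Nat.cast : ℕ → ℤ) hrec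
      have hidx : m + 1 + 1 = m + 2 := rfl
      rw [hidx, hcast]
      have : (PowerSeries.coeff (m + 2)) (2 * (PowerSeries.X : PowerSeries ℤ)) = 0 := by
        rw [show (2 : PowerSeries ℤ) * PowerSeries.X = PowerSeries.C 2 * PowerSeries.X
            from by rw [map_ofNat], PowerSeries.coeff_C_mul, PowerSeries.coeff_X]
        simp
      rw [this]
      simp
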